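/- arXiv:2510.19187 — 3 statements merged into one kernel-verified Lean document; each statement's English description precedes it below -/
import Mathlib

section
/- Let μ be a Borel probability measure with compact support in ℝ², and let Λ ⊆ ℝ² be a countable subset. Then Λ is a spectrum of μ if and only if Q_Λ(ξ) := Σ_{λ∈Λ} |μ̂(ξ+λ)|² = 1 for Lebesgue-almost every ξ ∈ ℝ². -/
set_option maxHeartbeats 1000000
set_option linter.unusedSectionVars false


open MeasureTheory Filter Set Metric
open scoped ENNReal

noncomputable section

/-- The plane with the Euclidean metric. -/
abbrev Plane : Type := EuclideanSpace ℝ (Fin 2)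

/-- The point `(a, b)` of the Euclidean plane. -/
def pt (a b : ℝ) : Plane := WithLp.toLp 2 ![a, b]

/-- The self-affine measure `μ_{R,B}` for `R = [[2,1],[0,2]]`, `B = {(0,0),(1,0)}`:
the pushforward of Lebesgue measure on `[0,1]` under `x ↦ (x, 0)`. -/
def muRB : Measure Plane :=
  Measure.map (fun x : ℝ => pt x 0) (volume.restrict (Set.Icc (0:ℝ) 1))

instance : IsProbabilityMeasure (volume.restrict (Set.Icc (0:ℝ) 1)) :=
  ⟨by simp [Real.volume_Icc]⟩

lemma measurable_pt0 : Measurable (fun x : ℝ => pt x 0) := by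
  unfold pt
  refine (WithLp.measurable_toLp 2 _).comp (measurable_pi_lambda _ (fun i => ?_))
  fin_cases i
  · simp only [Matrix.cons_val_zero]
    exact measurable_id
  · simp only [Matrix.cons_val_one, Matrix.head_cons]
    exact measurable_const

instance : IsProbabilityMeasure muRB :=
  Measure.isProbabilityMeasure_map measurable_pt0.aemeasurable

/-- The Fourier transform `μ̂(ξ) = ∫ e^{-2πi⟨ξ,x⟩} dμ(x)` of a measure on the plane. -/
def fourierTransform (μ : Measure Plane) (ξ : Plane) : ℂ :=
  ∫ x, Complex.exp ((-(2 * Real.pi * (inner ℝ ξ x : ℝ)) : ℝ) * Complex.I) ∂μ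

/-- The exponential function `e_λ(x) = e^{-2πi⟨λ,x⟩}`. -/
def expFn (lam : Plane) : Plane → ℂ :=
  fun x => Complex.exp ((-(2 * Real.pi * (inner ℝ lam x : ℝ)) : ℝ) * Complex.I)

lemma expFn_memLp (μ : Measure Plane) [IsFiniteMeasure μ] (lam : Plane) :
    MemLp (expFn lam) 2 μ := by
  refine MemLp.of_bound ?_ 1 ?_
  · apply Continuous.aestronglyMeasurable
    unfold expFn
    have h1 : Continuous fun x : Plane => (inner ℝ lam x : ℝ) :=
      continuous_const.inner continuous_id
    exact Complex.continuous_exp.comp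
      ((Complex.continuous_ofReal.comp ((continuous_const.mul h1).neg)).mul continuous_const)
  · refine Eventually.of_forall fun x => ?_
    unfold expFn
    rw [Complex.norm_exp_ofReal_mul_I]

/-- The exponential `e_λ` as an element of `L²(μ)`. -/
def expLp (μ : Measure Plane) [IsFiniteMeasure μ] (lam : Plane) : Lp ℂ 2 μ :=
  (expFn_memLp μ lam).toLp _

/-- `Λ` is an orthogonal set of `μ`: the exponentials `{e_λ : λ ∈ Λ}` form an
orthonormal family in `L²(μ)`. -/
def IsOrthogonalSet (μ : Measure Plane) [IsFiniteMeasure μ] (Λ : Set Plane) : Prop :=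
  Orthonormal ℂ (fun lam : Λ => expLp μ lam)

/-- `Λ` is a spectrum of `μ`: the exponentials `{e_λ : λ ∈ Λ}` form an
orthonormal basis of `L²(μ)`. -/
def IsSpectrum (μ : Measure Plane) [IsFiniteMeasure μ] (Λ : Set Plane) : Prop :=
  Orthonormal ℂ (fun lam : Λ => expLp μ lam) ∧
    (Submodule.span ℂ (Set.range (fun lam : Λ => expLp μ lam))).topologicalClosure = ⊤

/-- The upper `r`-Beurling density
`D_r^+(Λ) = limsup_{h→∞} sup_{x} #(Λ ∩ B(x,h)) / h^r`. -/
def beurlingDensity (r : ℝ) (Λ : Set Plane) : ℝ≥0∞ :=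
  limsup (fun h : ℝ =>
    ⨆ x : Plane, ((Λ ∩ Metric.ball x h).encard : ℝ≥0∞) / ENNReal.ofReal (h ^ r)) atTop

/-- The upper `r`-density (centered at the origin)
`B_r^+(Λ) = limsup_{h→∞} #(Λ ∩ B(0,h)) / h^r`. -/
def upperDensity (r : ℝ) (Λ : Set Plane) : ℝ≥0∞ :=
  limsup (fun h : ℝ =>
    ((Λ ∩ Metric.ball (0 : Plane) h).encard : ℝ≥0∞) / ENNReal.ofReal (h ^ r)) atTop

/-- The Beurling dimension `dim_Be(Λ) = sup {r > 0 : D_r^+(Λ) = ∞}`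
(equal to `0` when the set is empty, by the convention `sSup ∅ = 0` in `ℝ`). -/
def beurlingDim (Λ : Set Plane) : ℝ :=
  sSup {r : ℝ | 0 < r ∧ beurlingDensity r Λ = ⊤}

/-- The Banach dimension `dim_Ba(Λ) = sup {r > 0 : B_r^+(Λ) = ∞}`. -/
def banachDim (Λ : Set Plane) : ℝ :=
  sSup {r : ℝ | 0 < r ∧ upperDensity r Λ = ⊤}

/-- The sign of an integer, as a real number. -/
def isgn (n : ℤ) : ℝ := (Int.sign n : ℝ)

end


noncomputable section Aux

open ComplexConjugate

variable (μ : Measure Plane) [IsProbabilityMeasure μ]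

lemma expFn_continuous (a : Plane) : Continuous (expFn a) := by
  unfold expFn
  have h1 : Continuous fun x : Plane => (inner ℝ a x : ℝ) :=
    continuous_const.inner continuous_id
  exact Complex.continuous_exp.comp
    ((Complex.continuous_ofReal.comp ((continuous_const.mul h1).neg)).mul continuous_const)

lemma norm_expFn (a x : Plane) : ‖expFn a x‖ = 1 := by
  unfold expFn
  rw [Complex.norm_exp_ofReal_mul_I]

lemma expFn_mul (a b x : Plane) : expFn a x * expFn b x = expFn (a + b) x := by
  unfold expFn
  rw [← Complex.exp_add]
  congr 1
  rw [inner_add_left]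
  push_cast
  ring

lemma conj_expFn (a x : Plane) : conj (expFn a x) = expFn (-a) x := by
  unfold expFn
  rw [← Complex.exp_conj]
  congr 1
  rw [inner_neg_left]
  simp only [map_mul, Complex.conj_ofReal, Complex.conj_I]
  push_cast
  ring

lemma expFn_zero_eq (x : Plane) : expFn 0 x = 1 := by
  unfold expFn
  simp

lemma coeFn_expLp (a : Plane) : expLp μ a =ᵐ[μ] expFn a :=
  (expFn_memLp μ a).coeFn_toLp

lemma inner_L2 (h k : Lp ℂ 2 μ) :
    (inner ℂ h k : ℂ) = ∫ x, conj (h x) * k x ∂μ := by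
  rw [MeasureTheory.L2.inner_def]; simp [mul_comm]

lemma fourierTransform_eq_integral_expFn (ξ : Plane) :
    fourierTransform μ ξ = ∫ x, expFn ξ x ∂μ := rfl

lemma inner_expLp (a b : Plane) :
    (inner ℂ (expLp μ a) (expLp μ b) : ℂ) = fourierTransform μ (b - a) := by
  rw [inner_L2, fourierTransform_eq_integral_expFn]
  refine integral_congr_ae ?_
  filter_upwards [coeFn_expLp μ a, coeFn_expLp μ b] with x h1 h2
  rw [h1, h2, conj_expFn, expFn_mul]
  congr 1
  abel

lemma muFT_zero : fourierTransform μ 0 = 1 := by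
  rw [fourierTransform_eq_integral_expFn]
  have : ∀ x : Plane, expFn 0 x = 1 := expFn_zero_eq
  simp only [this, integral_const, probReal_univ, one_smul]

lemma muFT_neg (a : Plane) :
    fourierTransform μ (-a) = conj (fourierTransform μ a) := by
  rw [fourierTransform_eq_integral_expFn, fourierTransform_eq_integral_expFn, ← integral_conj]
  exact integral_congr_ae (Eventually.of_forall fun x => (conj_expFn a x).symm)

lemma norm_fourier_neg (a : Plane) :
    ‖fourierTransform μ (-a)‖ = ‖fourierTransform μ a‖ := by
  rw [muFT_neg, RCLike.norm_conj]

lemma inner_expLp_self (a : Plane) : (inner ℂ (expLp μ a) (expLp μ a) : ℂ) = 1 := by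
  rw [inner_expLp, sub_self, muFT_zero]

lemma norm_expLp (a : Plane) : ‖expLp μ a‖ = 1 := by
  have h := inner_expLp_self μ a
  rw [inner_self_eq_norm_sq_to_K] at h
  have h2 : ((‖expLp μ a‖ ^ 2 : ℝ) : ℂ) = ((1 : ℝ) : ℂ) := by push_cast; exact h
  have h3 : ‖expLp μ a‖ ^ 2 = 1 := Complex.ofReal_inj.mp h2
  calc ‖expLp μ a‖ = Real.sqrt (‖expLp μ a‖ ^ 2) := (Real.sqrt_sq (norm_nonneg _)).symm
    _ = 1 := by rw [h3, Real.sqrt_one]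

lemma norm_sq_inner_expLp (a ξ : Plane) :
    ‖(inner ℂ (expLp μ a) (expLp μ (-ξ)) : ℂ)‖ ^ 2 = ‖fourierTransform μ (ξ + a)‖ ^ 2 := by
  rw [inner_expLp]
  have h : -ξ - a = -(ξ + a) := by abel
  rw [h, norm_fourier_neg]

lemma fourier_continuous : Continuous (fourierTransform μ) := by
  have heq : (fun ξ => fourierTransform μ ξ) = fun ξ => ∫ x, expFn ξ x ∂μ := rfl
  rw [show (fourierTransform μ) = fun ξ => ∫ x, expFn ξ x ∂μ from rfl]
  refine continuous_of_dominated (fun ξ => (expFn_continuous ξ).aestronglyMeasurable)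
    (fun ξ => Eventually.of_forall fun x => le_of_eq (norm_expFn ξ x)) (integrable_const 1)
    (Eventually.of_forall fun x => ?_)
  unfold expFn
  have h1 : Continuous fun ξ : Plane => (inner ℝ ξ x : ℝ) :=
    continuous_id.inner continuous_const
  exact Complex.continuous_exp.comp
    ((Complex.continuous_ofReal.comp ((continuous_const.mul h1).neg)).mul continuous_const)

lemma integrable_Lp2 (g : Lp ℂ 2 μ) : Integrable (⇑g) μ :=
  (Lp.memLp g).integrable one_le_two

lemma aestronglyMeasurable_conj (g : Lp ℂ 2 μ) :
    AEStronglyMeasurable (fun x => (conj (g x) : ℂ)) μ :=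
  continuous_star.comp_aestronglyMeasurable (Lp.aestronglyMeasurable g)

lemma integrable_conj_Lp (g : Lp ℂ 2 μ) :
    Integrable (fun x => (conj (g x) : ℂ)) μ :=
  ⟨aestronglyMeasurable_conj μ g, (integrable_Lp2 μ g).2.congr'
    (Eventually.of_forall fun x => (RCLike.norm_conj _).symm)⟩

lemma inner_expLp_right_eq (g : Lp ℂ 2 μ) (η : Plane) :
    (inner ℂ g (expLp μ η) : ℂ) = ∫ x, conj (g x) * expFn η x ∂μ := by
  rw [inner_L2]
  refine integral_congr_ae ?_
  filter_upwards [coeFn_expLp μ η] with x hx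
  rw [hx]

lemma continuous_inner_expLp (g : Lp ℂ 2 μ) :
    Continuous fun η : Plane => (inner ℂ g (expLp μ η) : ℂ) := by
  rw [show (fun η : Plane => (inner ℂ g (expLp μ η) : ℂ))
      = fun η => ∫ x, conj (g x) * expFn η x ∂μ from funext (inner_expLp_right_eq μ g)]
  refine continuous_of_dominated
    (fun η => (aestronglyMeasurable_conj μ g).mul (expFn_continuous η).aestronglyMeasurable)
    (fun η => Eventually.of_forall fun x => ?_) (integrable_Lp2 μ g).norm
    (Eventually.of_forall fun x => ?_)
  · rw [norm_mul, norm_expFn, mul_one, RCLike.norm_conj]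
  · have h1 : Continuous fun η : Plane => expFn η x := by
      unfold expFn
      have h2 : Continuous fun η : Plane => (inner ℝ η x : ℝ) :=
        continuous_id.inner continuous_const
      exact Complex.continuous_exp.comp
        ((Complex.continuous_ofReal.comp ((continuous_const.mul h2).neg)).mul continuous_const)
    exact continuous_const.mul h1

/-- A closed property holding almost everywhere w.r.t. Lebesgue holds everywhere. -/
lemma all_of_ae_closed {P : Plane → Prop} (hc : IsClosed {ξ | P ξ})
    (hae : ∀ᵐ ξ ∂(volume : Measure Plane), P ξ) : ∀ ξ, P ξ := by
  by_contra h
  push_neg at h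
  obtain ⟨ξ0, hξ0⟩ := h
  have hopen : IsOpen {ξ | P ξ}ᶜ := hc.isOpen_compl
  have hpos : 0 < (volume : Measure Plane) {ξ | P ξ}ᶜ :=
    hopen.measure_pos volume ⟨ξ0, hξ0⟩
  rw [ae_iff] at hae
  exact hpos.ne' hae

end Aux

noncomputable section Density

open ComplexConjugate

variable (μ : Measure Plane) [IsProbabilityMeasure μ]

/-- The exponential as a continuous map. -/
def expCM (a : Plane) : C(Plane, ℂ) := ⟨expFn a, expFn_continuous a⟩

/-- The linear span of all exponentials inside `C(Plane, ℂ)`. -/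
def expSpan : Submodule ℂ C(Plane, ℂ) := Submodule.span ℂ (Set.range expCM)

lemma expCM_mul (a b : Plane) : expCM a * expCM b = expCM (a + b) := by
  ext x
  exact expFn_mul a b x

lemma expCM_star (a : Plane) : star (expCM a) = expCM (-a) := by
  ext x
  exact conj_expFn a x

lemma one_mem_expSpan : (1 : C(Plane, ℂ)) ∈ expSpan := by
  have h : (1 : C(Plane, ℂ)) = expCM 0 := by
    ext x
    exact (expFn_zero_eq x).symm
  rw [h]
  exact Submodule.subset_span ⟨0, rfl⟩

lemma mul_mem_expSpan : ∀ p q : C(Plane, ℂ), p ∈ expSpan → q ∈ expSpan → p * q ∈ expSpan := by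
  intro p q hp hq
  refine Submodule.span_induction₂ (p := fun x y _ _ => x * y ∈ expSpan)
    ?_ ?_ ?_ ?_ ?_ ?_ ?_ hp hq
  · rintro x y ⟨a, rfl⟩ ⟨b, rfl⟩
    show expCM a * expCM b ∈ expSpan
    rw [expCM_mul]
    exact Submodule.subset_span ⟨a + b, rfl⟩
  · intro y _; show (0 : C(Plane, ℂ)) * y ∈ expSpan; rw [zero_mul]; exact zero_mem _
  · intro x _; show x * (0 : C(Plane, ℂ)) ∈ expSpan; rw [mul_zero]; exact zero_mem _
  · intro x y z _ _ _ h1 h2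
    show (x + y) * z ∈ expSpan
    rw [add_mul]; exact add_mem h1 h2
  · intro x y z _ _ _ h1 h2
    show x * (y + z) ∈ expSpan
    rw [mul_add]; exact add_mem h1 h2
  · intro r x y _ _ h1
    show (r • x) * y ∈ expSpan
    rw [smul_mul_assoc]; exact Submodule.smul_mem _ _ h1
  · intro r x y _ _ h1
    show x * (r • y) ∈ expSpan
    rw [mul_smul_comm]; exact Submodule.smul_mem _ _ h1

lemma star_mem_expSpan : ∀ p : C(Plane, ℂ), p ∈ expSpan → star p ∈ expSpan := by
  intro p hp
  refine Submodule.span_induction (p := fun x _ => star x ∈ expSpan) ?_ ?_ ?_ ?_ hp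
  · rintro x ⟨a, rfl⟩
    show star (expCM a) ∈ expSpan
    rw [expCM_star]
    exact Submodule.subset_span ⟨-a, rfl⟩
  · show star (0 : C(Plane, ℂ)) ∈ expSpan
    rw [star_zero]; exact zero_mem _
  · intro x y _ _ h1 h2
    show star (x + y) ∈ expSpan
    rw [star_add]
    exact add_mem h1 h2
  · intro r x _ h1
    show star (r • x) ∈ expSpan
    rw [star_smul]
    exact Submodule.smul_mem _ _ h1

/-- The star subalgebra of trigonometric polynomials. -/
def expAlg : StarSubalgebra ℂ C(Plane, ℂ) :=
  { toSubalgebra := Submodule.toSubalgebra expSpan one_mem_expSpan mul_mem_expSpan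
    star_mem' := fun {p} hp => star_mem_expSpan p hp }

lemma mem_expAlg {p : C(Plane, ℂ)} : p ∈ expAlg ↔ p ∈ expSpan := Iff.rfl

/-- Exponentials separate points of the plane. -/
lemma expFn_separates {x y : Plane} (hxy : x ≠ y) :
    ∃ ξ : Plane, expFn ξ x ≠ expFn ξ y := by
  set d : Plane := x - y with hd
  have hdne : d ≠ 0 := sub_ne_zero.mpr hxy
  have hnorm : ‖d‖ ^ 2 ≠ 0 := pow_ne_zero _ (norm_ne_zero_iff.mpr hdne)
  refine ⟨(2 * ‖d‖ ^ 2)⁻¹ • d, fun hcontra => ?_⟩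
  unfold expFn at hcontra
  rw [Complex.exp_eq_exp_iff_exists_int] at hcontra
  obtain ⟨n, hn⟩ := hcontra
  have him := congrArg Complex.im hn
  simp only [Complex.add_im, Complex.mul_im, Complex.mul_re, Complex.I_re, Complex.I_im,
    Complex.ofReal_re, Complex.ofReal_im, Complex.intCast_re, Complex.intCast_im,
    Complex.re_ofNat, Complex.im_ofNat, mul_zero, zero_mul, mul_one, add_zero, zero_add,
    sub_zero] at him
  set u : ℝ := inner ℝ ((2 * ‖d‖ ^ 2)⁻¹ • d) x with hu
  set v : ℝ := inner ℝ ((2 * ‖d‖ ^ 2)⁻¹ • d) y with hv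
  have huv : u - v = 1 / 2 := by
    rw [hu, hv, ← inner_sub_right, ← hd, real_inner_smul_left, real_inner_self_eq_norm_sq]
    field_simp
  have hpi := Real.pi_ne_zero
  have hkey : (2 * (n : ℝ) + 1) * Real.pi = 0 := by
    linear_combination (-1 : ℝ) * him + (-2 * Real.pi) * huv
  have h2n : (2 * n + 1 : ℤ) = 0 := by
    rcases mul_eq_zero.mp hkey with h | h
    · exact_mod_cast h
    · exact absurd h hpi
  omega

/-- If `g ∈ L²(μ)` is orthogonal to every exponential, and `μ` is compactly supported,
then `g = 0`. -/
lemma eq_zero_of_inner_expLp_eq_zero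
    (hK : ∃ K : Set Plane, IsCompact K ∧ μ Kᶜ = 0) (g : Lp ℂ 2 μ)
    (h : ∀ ξ : Plane, (inner ℂ g (expLp μ ξ) : ℂ) = 0) : g = 0 := by
  obtain ⟨K, hKc, hKm⟩ := hK
  haveI : CompactSpace ↥K := isCompact_iff_compactSpace.mp hKc
  have haeK : ∀ᵐ x ∂μ, x ∈ K := by
    rw [ae_iff]
    exact hKm
  -- restriction star algebra homomorphism
  set ι : C(↥K, Plane) := ⟨Subtype.val, continuous_subtype_val⟩ with hι
  set ρ : C(Plane, ℂ) →⋆ₐ[ℂ] C(↥K, ℂ) := ContinuousMap.compStarAlgHom' ℂ ℂ ι with hρ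
  set A : StarSubalgebra ℂ C(↥K, ℂ) := StarSubalgebra.map ρ expAlg with hA
  have hρapp : ∀ (q : C(Plane, ℂ)) (z : ↥K), (ρ q) z = q (z : Plane) := fun q z => rfl
  have hsep : A.SeparatesPoints := by
    rintro x y hxy
    have hxyP : (x : Plane) ≠ (y : Plane) := fun hc => hxy (Subtype.ext hc)
    obtain ⟨ξ, hξ⟩ := expFn_separates hxyP
    refine ⟨_, ⟨ρ (expCM ξ), ⟨expCM ξ, Submodule.subset_span ⟨ξ, rfl⟩, rfl⟩, rfl⟩, ?_⟩
    exact hξ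
  have htop : A.topologicalClosure = ⊤ :=
    ContinuousMap.starSubalgebra_topologicalClosure_eq_top_of_separatesPoints A hsep
  -- the key integral functional
  have hgint : Integrable (⇑g) μ := integrable_Lp2 μ g
  set C : ℝ := ∫ x, ‖g x‖ ∂μ with hC
  have hCnn : 0 ≤ C := integral_nonneg fun x => norm_nonneg _
  -- vanishing on the span
  have hspan : ∀ q ∈ expSpan, Integrable (fun x => conj (g x) * q x) μ ∧
      ∫ x, conj (g x) * q x ∂μ = 0 := by
    intro q hq
    refine Submodule.span_induction
      (p := fun q _ => Integrable (fun x => conj (g x) * q x) μ ∧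
        ∫ x, conj (g x) * q x ∂μ = 0) ?_ ?_ ?_ ?_ hq
    · rintro q ⟨a, rfl⟩
      constructor
      · have hint : Integrable (fun x => conj (g x)) μ := integrable_conj_Lp μ g
        have := hint.bdd_mul (c := 1) (expFn_continuous a).aestronglyMeasurable
          (Eventually.of_forall fun x => le_of_eq (norm_expFn a x))
        refine this.congr (Eventually.of_forall fun x => ?_)
        show expFn a x * conj (g x) = conj (g x) * (expCM a) x
        rw [mul_comm]; rfl
      · rw [show (∫ x, conj (g x) * (expCM a) x ∂μ) = inner ℂ g (expLp μ a) from
          (inner_expLp_right_eq μ g a).symm]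
        exact h a
    · constructor
      · simpa using (integrable_zero _ _ μ)
      · simp
    · rintro p q _ _ ⟨hip, hvp⟩ ⟨hiq, hvq⟩
      constructor
      · refine (hip.add hiq).congr (Eventually.of_forall fun x => ?_)
        simp [mul_add]
      · rw [show (fun x => conj (g x) * (p + q) x) = fun x => conj (g x) * p x + conj (g x) * q x
          from funext fun x => by simp [mul_add]]
        rw [integral_add hip hiq, hvp, hvq, add_zero]
    · rintro c q _ ⟨hiq, hvq⟩
      constructor
      · refine (hiq.smul c).congr (Eventually.of_forall fun x => ?_)
        show c • (conj (g x) * q x) = conj (g x) * (c • q) x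
        simp [smul_eq_mul]
        ring
      · rw [show (fun x => conj (g x) * (c • q) x) = fun x => c * (conj (g x) * q x)
          from funext fun x => by simp [smul_eq_mul]; ring]
        rw [integral_const_mul, hvq, mul_zero]
  -- vanishing on bounded continuous functions
  have hBCF : ∀ f : BoundedContinuousFunction Plane ℂ, ∫ x, conj (g x) * f x ∂μ = 0 := by
    intro f
    have hintf : Integrable (fun x => conj (g x) * f x) μ := by
      have hint : Integrable (fun x => conj (g x)) μ := integrable_conj_Lp μ g
      have := hint.bdd_mul (c := ‖f‖) f.continuous.aestronglyMeasurable
        (Eventually.of_forall fun x => f.norm_coe_le_norm x)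
      refine this.congr (Eventually.of_forall fun x => mul_comm _ _)
    have hbound : ∀ ε : ℝ, 0 < ε → ‖∫ x, conj (g x) * f x ∂μ‖ ≤ ε * C := by
      intro ε hε
      -- approximate f on K by a trigonometric polynomial
      have hmem : ρ f.toContinuousMap ∈ closure (A : Set C(↥K, ℂ)) := by
        have : ρ f.toContinuousMap ∈ A.topologicalClosure := by
          rw [htop]; trivial
        exact this
      rw [Metric.mem_closure_iff] at hmem
      obtain ⟨b, hbA, hbdist⟩ := hmem (ε := ε) hε
      obtain ⟨q, hqA, rfl⟩ := hbA
      have hqS : q ∈ expSpan := hqA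
      obtain ⟨hiq, hvq⟩ := hspan q hqS
      have hptK : ∀ x, x ∈ K → ‖f x - q x‖ ≤ ε := by
        intro x hx
        have h1 : dist (f x) (q x) ≤ dist (ρ f.toContinuousMap) (ρ.toAlgHom q) :=
          ContinuousMap.dist_apply_le_dist (f := ρ f.toContinuousMap) (g := ρ.toAlgHom q)
            (⟨x, hx⟩ : ↥K)
        rw [dist_eq_norm] at h1
        exact h1.trans hbdist.le
      have hdiff : Integrable (fun x => conj (g x) * (f x - q x)) μ := by
        refine (hintf.sub hiq).congr (Eventually.of_forall fun x => ?_)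
        exact (mul_sub (conj (g x)) (f x) (q x)).symm
      have heq : ∫ x, conj (g x) * f x ∂μ = ∫ x, conj (g x) * (f x - q x) ∂μ := by
        have h2 : ∫ x, conj (g x) * (f x - q x) ∂μ
            = ∫ x, (conj (g x) * f x - conj (g x) * q x) ∂μ :=
          integral_congr_ae (Eventually.of_forall fun x => mul_sub _ _ _)
        rw [h2, integral_sub hintf hiq, hvq, sub_zero]
      rw [heq]
      have hmono : ∫ x, ‖conj (g x) * (f x - q x)‖ ∂μ ≤ ∫ x, ε * ‖g x‖ ∂μ := by
        refine integral_mono_ae hdiff.norm (hgint.norm.const_mul ε) ?_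
        filter_upwards [haeK] with x hx
        rw [norm_mul, RCLike.norm_conj]
        calc ‖g x‖ * ‖f x - q x‖ ≤ ‖g x‖ * ε :=
              mul_le_mul_of_nonneg_left (hptK x hx) (norm_nonneg _)
          _ = ε * ‖g x‖ := mul_comm _ _
      calc ‖∫ x, conj (g x) * (f x - q x) ∂μ‖ ≤ ∫ x, ‖conj (g x) * (f x - q x)‖ ∂μ :=
            norm_integral_le_integral_norm _
        _ ≤ ∫ x, ε * ‖g x‖ ∂μ := hmono
        _ = ε * C := by rw [integral_const_mul]
    -- conclude the integral is zero
    have hzero : ‖∫ x, conj (g x) * f x ∂μ‖ ≤ 0 := by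
      by_contra hcon
      push_neg at hcon
      set I := ‖∫ x, conj (g x) * f x ∂μ‖
      have hI : 0 < I := hcon
      have := hbound (I / (2 * (C + 1))) (by positivity)
      have hlt : I / (2 * (C + 1)) * C < I := by
        rw [div_mul_eq_mul_div, div_lt_iff₀ (by positivity)]
        nlinarith
      linarith
    have := norm_nonneg (∫ x, conj (g x) * f x ∂μ)
    have : ‖∫ x, conj (g x) * f x ∂μ‖ = 0 := le_antisymm hzero this
    exact norm_eq_zero.mp this
  -- bounded continuous functions are dense in L²
  have hdense : Dense (MeasureTheory.Lp.boundedContinuousFunction ℂ 2 μ : Set (Lp ℂ 2 μ)) :=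
    MeasureTheory.Lp.boundedContinuousFunction_dense ℂ μ ENNReal.ofNat_ne_top
  have hsub : (MeasureTheory.Lp.boundedContinuousFunction ℂ 2 μ : Set (Lp ℂ 2 μ))
      ⊆ {k : Lp ℂ 2 μ | (inner ℂ g k : ℂ) = 0} := by
    intro k hk
    obtain ⟨f₀, hf₀⟩ := MeasureTheory.Lp.mem_boundedContinuousFunction_iff.mp hk
    have hkae : ⇑k =ᵐ[μ] ⇑f₀ := by
      have h1 : ((f₀.toContinuousMap.toAEEqFun μ : Plane →ₘ[μ] ℂ) : Plane → ℂ)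
          =ᵐ[μ] ⇑f₀.toContinuousMap := ContinuousMap.coeFn_toAEEqFun μ _
      rw [hf₀] at h1
      exact h1
    show (inner ℂ g k : ℂ) = 0
    rw [inner_L2]
    rw [show (∫ x, conj (g x) * k x ∂μ) = ∫ x, conj (g x) * f₀ x ∂μ from
      integral_congr_ae (by filter_upwards [hkae] with x hx; rw [hx])]
    exact hBCF f₀
  have hclosed : IsClosed {k : Lp ℂ 2 μ | (inner ℂ g k : ℂ) = 0} := by
    have hcont : Continuous fun k : Lp ℂ 2 μ => (inner ℂ g k : ℂ) :=
      (innerSL ℂ g).continuous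
    exact isClosed_eq hcont continuous_const
  have hall : ∀ k : Lp ℂ 2 μ, (inner ℂ g k : ℂ) = 0 := by
    intro k
    have : (Set.univ : Set (Lp ℂ 2 μ)) ⊆ {k : Lp ℂ 2 μ | (inner ℂ g k : ℂ) = 0} := by
      rw [← hdense.closure_eq]
      exact hclosed.closure_subset_iff.mpr hsub
    exact this (Set.mem_univ k)
  have := hall g
  exact inner_self_eq_zero.mp this

end Density

/-- Jorgensen–Pedersen criterion. Let `μ` be a compactly supported Borel
probability measure on the plane and `Λ` a countable set. Then `Λ` is a spectrum of `μ`
iff `Q_Λ(ξ) = Σ_{λ∈Λ} |μ̂(ξ+λ)|² = 1` for Lebesgue-a.e. `ξ`. -/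
theorem isSpectrum_iff_sum_sq_fourier_ae_one (μ : Measure Plane) [IsProbabilityMeasure μ]
    (hK : ∃ K : Set Plane, IsCompact K ∧ μ Kᶜ = 0)
    (Λ : Set Plane) (hΛ : Λ.Countable) :
    IsSpectrum μ Λ ↔
      ∀ᵐ ξ ∂(volume : Measure Plane),
        (∑' lam : Λ, ‖fourierTransform μ (ξ + (lam : Plane))‖ ^ 2) = 1 := by
  classical
  constructor
  · rintro ⟨hON, hsp⟩
    refine ae_of_all _ fun ξ => ?_
    let b : HilbertBasis Λ ℂ (Lp ℂ 2 μ) := HilbertBasis.mk hON hsp.ge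
    have hb : ∀ lam : Λ, b lam = expLp μ (lam : Plane) := fun lam => by
      rw [HilbertBasis.coe_mk]
    have hsum := b.tsum_inner_mul_inner (expLp μ (-ξ)) (expLp μ (-ξ))
    have hxx : (inner ℂ (expLp μ (-ξ)) (expLp μ (-ξ)) : ℂ) = 1 := inner_expLp_self μ (-ξ)
    have hterm : ∀ lam : Λ,
        (inner ℂ (expLp μ (-ξ)) (b lam) : ℂ) * inner ℂ (b lam) (expLp μ (-ξ))
          = ((‖fourierTransform μ (ξ + (lam : Plane))‖ ^ 2 : ℝ) : ℂ) := by
      intro lam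
      rw [← inner_conj_symm (expLp μ (-ξ)) (b lam)]
      set w : ℂ := inner ℂ (b lam) (expLp μ (-ξ)) with hwdef
      have hcw : (starRingEnd ℂ) w * w = ((‖w‖ ^ 2 : ℝ) : ℂ) := by
        rw [mul_comm, Complex.mul_conj]
        norm_cast
        rw [Complex.normSq_eq_norm_sq]
      rw [hcw]
      congr 1
      rw [hwdef, hb lam]
      exact norm_sq_inner_expLp μ lam ξ
    have hsummable : Summable fun lam : Λ =>
        ‖(inner ℂ (expLp μ (lam : Plane)) (expLp μ (-ξ)) : ℂ)‖ ^ 2 :=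
      hON.inner_products_summable (expLp μ (-ξ))
    have hQsummable : Summable fun lam : Λ => ‖fourierTransform μ (ξ + (lam : Plane))‖ ^ 2 :=
      hsummable.congr fun lam => norm_sq_inner_expLp μ lam ξ
    have h1C : ((∑' lam : Λ, ‖fourierTransform μ (ξ + (lam : Plane))‖ ^ 2 : ℝ) : ℂ) = 1 := by
      calc ((∑' lam : Λ, ‖fourierTransform μ (ξ + (lam : Plane))‖ ^ 2 : ℝ) : ℂ)
          = ∑' lam : Λ, ((‖fourierTransform μ (ξ + (lam : Plane))‖ ^ 2 : ℝ) : ℂ) :=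
            Complex.ofRealCLM.map_tsum hQsummable
        _ = ∑' lam : Λ, (inner ℂ (expLp μ (-ξ)) (b lam) : ℂ) * inner ℂ (b lam) (expLp μ (-ξ)) :=
            (tsum_congr hterm).symm
        _ = inner ℂ (expLp μ (-ξ)) (expLp μ (-ξ)) := hsum
        _ = 1 := hxx
    have := congrArg Complex.re h1C
    simpa only [Complex.ofReal_re, Complex.one_re] using this
  · intro hae
    have hgood : ∀ᵐ ξ ∂(volume : Measure Plane),
        Summable (fun lam : Λ => ‖fourierTransform μ (ξ + (lam : Plane))‖ ^ 2) ∧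
        (∑' lam : Λ, ‖fourierTransform μ (ξ + (lam : Plane))‖ ^ 2) = 1 := by
      filter_upwards [hae] with ξ hξ
      refine ⟨?_, hξ⟩
      by_contra hns
      rw [tsum_eq_zero_of_not_summable hns] at hξ
      norm_num at hξ
    have hcont1 : ∀ a : Plane, Continuous fun ξ : Plane => ‖fourierTransform μ (ξ + a)‖ ^ 2 :=
      fun a => (((fourier_continuous μ).comp (continuous_id.add continuous_const)).norm).pow 2
    have hpair : ∀ a, ∀ ha : a ∈ Λ, ∀ b, ∀ hb : b ∈ Λ, a ≠ b →
        fourierTransform μ (b - a) = 0 := by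
      intro a ha b hb hab
      have hij : (⟨a, ha⟩ : Λ) ≠ ⟨b, hb⟩ := by simpa using hab
      have hle : ∀ ξ : Plane,
          ‖fourierTransform μ (ξ + a)‖ ^ 2 + ‖fourierTransform μ (ξ + b)‖ ^ 2 ≤ 1 := by
        refine all_of_ae_closed ?_ ?_
        · exact isClosed_le ((hcont1 a).add (hcont1 b)) continuous_const
        · filter_upwards [hgood] with ξ hξ
          obtain ⟨hs, ht⟩ := hξ
          have hsum := Summable.sum_le_tsum ({⟨a, ha⟩, ⟨b, hb⟩} : Finset Λ)
            (fun i _ => by positivity) hs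
          rw [Finset.sum_pair hij, ht] at hsum
          exact hsum
      have h0 := hle (-a)
      rw [show -a + a = (0 : Plane) by abel, muFT_zero μ,
        show -a + b = b - a by abel] at h0
      have hn1 : ‖(1 : ℂ)‖ ^ 2 = 1 := by norm_num
      rw [hn1] at h0
      have h2 : ‖fourierTransform μ (b - a)‖ = 0 := by
        nlinarith [norm_nonneg (fourierTransform μ (b - a)),
          sq_nonneg ‖fourierTransform μ (b - a)‖]
      exact norm_eq_zero.mp h2
    have hON : Orthonormal ℂ (fun lam : Λ => expLp μ (lam : Plane)) := by
      rw [orthonormal_iff_ite]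
      intro i j
      rw [inner_expLp]
      by_cases hij : i = j
      · subst hij
        rw [sub_self, muFT_zero μ, if_pos rfl]
      · rw [if_neg hij]
        exact hpair i i.2 j j.2 fun hc => hij (Subtype.ext hc)
    refine ⟨hON, ?_⟩
    rw [Submodule.topologicalClosure_eq_top_iff, Submodule.eq_bot_iff]
    intro g hg
    by_contra hgne
    have hgnorm : ‖g‖ ≠ 0 := fun hc => hgne (norm_eq_zero.mp hc)
    set g' : Lp ℂ 2 μ := ((‖g‖⁻¹ : ℝ) : ℂ) • g with hg'def
    have hg'norm : ‖g'‖ = 1 := by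
      rw [hg'def, norm_smul, Complex.norm_real, Real.norm_eq_abs,
        abs_of_nonneg (inv_nonneg.mpr (norm_nonneg g))]
      exact inv_mul_cancel₀ hgnorm
    have horth : ∀ lam : Λ, (inner ℂ (expLp μ (lam : Plane)) g' : ℂ) = 0 := by
      intro lam
      have hmem : expLp μ (lam : Plane)
          ∈ Submodule.span ℂ (Set.range fun lam : Λ => expLp μ (lam : Plane)) :=
        Submodule.subset_span ⟨lam, rfl⟩
      have h0 : (inner ℂ (expLp μ (lam : Plane)) g : ℂ) = 0 :=
        (Submodule.mem_orthogonal _ g).mp hg _ hmem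
      rw [hg'def, inner_smul_right, h0, mul_zero]
    set w : Option Λ → Lp ℂ 2 μ :=
      fun o => Option.elim o g' (fun lam => expLp μ (lam : Plane)) with hwdef
    have hwn : w none = g' := rfl
    have hws : ∀ lam : Λ, w (some lam) = expLp μ (lam : Plane) := fun _ => rfl
    have hONw : Orthonormal ℂ w := by
      rw [orthonormal_iff_ite]
      rintro (_ | i) (_ | j)
      · rw [if_pos rfl, hwn, inner_self_eq_norm_sq_to_K, hg'norm]
        norm_num
      · rw [if_neg (by simp), hwn, hws, ← inner_conj_symm, horth j, map_zero]
      · rw [if_neg (by simp), hwn, hws, horth i]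
      · rw [hws, hws]
        have := (orthonormal_iff_ite.mp hON) i j
        rw [this]
        by_cases hij : i = j
        · subst hij; rw [if_pos rfl, if_pos rfl]
        · rw [if_neg hij, if_neg (by simpa using hij)]
    have hae2 : ∀ᵐ ξ ∂(volume : Measure Plane), (inner ℂ g' (expLp μ (-ξ)) : ℂ) = 0 := by
      filter_upwards [hgood] with ξ hξ
      obtain ⟨hs, ht⟩ := hξ
      have hxnorm : ‖expLp μ (-ξ)‖ = 1 := norm_expLp μ _
      have hball : ∀ F : Finset Λ,
          (∑ lam ∈ F, ‖fourierTransform μ (ξ + (lam : Plane))‖ ^ 2)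
            + ‖(inner ℂ g' (expLp μ (-ξ)) : ℂ)‖ ^ 2 ≤ 1 := by
        intro F
        have hBess := hONw.sum_inner_products_le (expLp μ (-ξ))
          (s := insert none (F.image some))
        rw [hxnorm, one_pow] at hBess
        have hnone : (none : Option Λ) ∉ F.image some := by simp
        rw [Finset.sum_insert hnone,
          Finset.sum_image (fun i _ j _ h => Option.some_injective _ h)] at hBess
        simp only [hwn, hws] at hBess
        have hrw : ∀ lam : Λ,
            ‖(inner ℂ (expLp μ (lam : Plane)) (expLp μ (-ξ)) : ℂ)‖ ^ 2
              = ‖fourierTransform μ (ξ + (lam : Plane))‖ ^ 2 :=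
          fun lam => norm_sq_inner_expLp μ lam ξ
        simp only [hrw] at hBess
        linarith
      have hhs : HasSum (fun lam : Λ => ‖fourierTransform μ (ξ + (lam : Plane))‖ ^ 2) 1 := by
        have := hs.hasSum
        rwa [ht] at this
      have hle2 : (1 : ℝ) ≤ 1 - ‖(inner ℂ g' (expLp μ (-ξ)) : ℂ)‖ ^ 2 :=
        le_of_tendsto hhs (Eventually.of_forall fun F => by linarith [hball F])
      have h2 : ‖(inner ℂ g' (expLp μ (-ξ)) : ℂ)‖ = 0 := by
        nlinarith [norm_nonneg (inner ℂ g' (expLp μ (-ξ)) : ℂ),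
          sq_nonneg ‖(inner ℂ g' (expLp μ (-ξ)) : ℂ)‖]
      exact norm_eq_zero.mp h2
    have hallη : ∀ η : Plane, (inner ℂ g' (expLp μ η) : ℂ) = 0 := by
      have hcl : IsClosed {ξ : Plane | (inner ℂ g' (expLp μ (-ξ)) : ℂ) = 0} :=
        isClosed_eq ((continuous_inner_expLp μ g').comp continuous_neg) continuous_const
      have h3 := all_of_ae_closed hcl hae2
      intro η
      have := h3 (-η)
      rwa [neg_neg] at this
    have hzero : g' = 0 := eq_zero_of_inner_expLp_eq_zero μ hK g' hallη
    rw [hzero, norm_zero] at hg'norm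
    exact zero_ne_one hg'norm
end

section
/- Let μ = μ_{R,B} be the self-affine measure for R = [[2,1],[0,2]] and B = {(0,0),(1,0)}, and let Λ ⊆ ℝ² with 0 ∈ Λ. Then Λ is a spectrum of μ if and only if there exists a function β : ℤ → ℝ with β(0) = 0 such that Λ = {(n, β(n)) : n ∈ ℤ}. -/
open MeasureTheory Filter Set Metric
open scoped ENNReal

-- ===== auxiliary lemmas =====
namespace SpecAux

open Complex

noncomputable section

lemma inner_pt (lam : Plane) (t : ℝ) : (inner ℝ lam (pt t 0) : ℝ) = lam 0 * t := by
  simp [pt, PiLp.inner_apply, Fin.sum_univ_two, mul_comm]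

def K (d : ℝ) : ℂ := ∫ s in (0:ℝ)..1, Complex.exp (((2*Real.pi*d*s : ℝ)) * Complex.I)

lemma K_zero : K 0 = 1 := by simp [K]

lemma K_eval {d : ℝ} (hd : d ≠ 0) :
    K d = (Complex.exp ((2*Real.pi*d : ℝ) * Complex.I) - 1) / ((2*Real.pi*d : ℝ) * Complex.I) := by
  have hc : ((2*Real.pi*d : ℝ) : ℂ) * Complex.I ≠ 0 := by
    apply mul_ne_zero _ Complex.I_ne_zero
    simp only [ne_eq, Complex.ofReal_eq_zero]
    positivity
  have heq : ∀ s : ℝ, Complex.exp (((2*Real.pi*d*s : ℝ)) * Complex.I)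
      = Complex.exp ((((2*Real.pi*d : ℝ) : ℂ) * Complex.I) * s) := by
    intro s; congr 1; push_cast; ring
  rw [K]
  simp_rw [heq]
  rw [integral_exp_mul_complex hc]
  norm_num

lemma K_int {n : ℤ} (hn : n ≠ 0) : K (n : ℝ) = 0 := by
  have h : Complex.exp ((2*Real.pi*(n:ℝ) : ℝ) * Complex.I) = 1 := by
    push_cast
    rw [show (2*(Real.pi:ℂ)*n) * Complex.I = n * (2*Real.pi*Complex.I) by ring]
    exact Complex.exp_int_mul_two_pi_mul_I n
  rw [K_eval (by exact_mod_cast hn), h, sub_self, zero_div]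

lemma K_eq_zero_iff {d : ℝ} : K d = 0 ↔ ∃ n : ℤ, n ≠ 0 ∧ d = n := by
  constructor
  · intro h
    rcases eq_or_ne d 0 with rfl | hd
    · rw [K_zero] at h; exact absurd h one_ne_zero
    rw [K_eval hd, div_eq_zero_iff] at h
    have hc : ((2*Real.pi*d : ℝ) : ℂ) * Complex.I ≠ 0 := by
      apply mul_ne_zero _ Complex.I_ne_zero
      simp only [ne_eq, Complex.ofReal_eq_zero]
      positivity
    rcases h with h | h
    · rw [sub_eq_zero] at h
      rw [Complex.exp_eq_one_iff] at h
      obtain ⟨n, hn⟩ := h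
      have hdn : (d : ℂ) = n := by
        have h2 : ((2*Real.pi*d : ℝ) : ℂ) * Complex.I = ((n:ℂ) * (2*Real.pi)) * Complex.I := by
          rw [hn]; ring
        have h3 := mul_right_cancel₀ Complex.I_ne_zero h2
        have h4 : 2*Real.pi*d = (n:ℝ)*(2*Real.pi) := by exact_mod_cast h3
        have h5 : d = (n:ℝ) := by
          have h6 : (2*Real.pi) * d = (2*Real.pi) * (n:ℝ) := by linarith
          exact mul_left_cancel₀ (by positivity) h6
        exact_mod_cast h5
      refine ⟨n, ?_, by exact_mod_cast hdn⟩
      rintro rfl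
      rw [Int.cast_zero] at hdn
      exact hd (by exact_mod_cast hdn)
    · exact absurd h hc
  · rintro ⟨n, hn, rfl⟩; exact K_int hn

lemma muRB_eq : muRB = Measure.map (fun x : ℝ => pt x 0) (volume.restrict (Set.Icc (0:ℝ) 1)) :=
  rfl

lemma coeFn_expLp (lam : Plane) :
    (expLp muRB lam : Lp ℂ 2 muRB) =ᵐ[muRB] expFn lam :=
  (expFn_memLp muRB lam).coeFn_toLp

lemma continuous_expFn (l : Plane) : Continuous (expFn l) := by
  unfold expFn
  have h1 : Continuous fun x : Plane => (inner ℝ l x : ℝ) :=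
    continuous_const.inner continuous_id
  exact Complex.continuous_exp.comp
    ((Complex.continuous_ofReal.comp ((continuous_const.mul h1).neg)).mul continuous_const)

lemma inner_expLp (lam lam' : Plane) :
    (inner ℂ (expLp muRB lam) (expLp muRB lam') : ℂ) = K (lam 0 - lam' 0) := by
  rw [MeasureTheory.L2.inner_def]
  have hcongr : (fun x => (inner ℂ ((expLp muRB lam : Lp ℂ 2 muRB) x)
        ((expLp muRB lam' : Lp ℂ 2 muRB) x) : ℂ))
      =ᵐ[muRB] fun x => (inner ℂ (expFn lam x) (expFn lam' x) : ℂ) := by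
    filter_upwards [coeFn_expLp lam, coeFn_expLp lam'] with x hx hx'
    rw [hx, hx']
  rw [integral_congr_ae hcongr]
  have hmeas : AEStronglyMeasurable
      (fun x : Plane => (inner ℂ (expFn lam x) (expFn lam' x) : ℂ)) muRB := by
    apply Continuous.aestronglyMeasurable
    exact Continuous.inner (continuous_expFn lam) (continuous_expFn lam')
  rw [muRB_eq] at hmeas ⊢
  rw [integral_map measurable_pt0.aemeasurable hmeas]
  have hpt : ∀ t : ℝ, (inner ℂ (expFn lam (pt t 0)) (expFn lam' (pt t 0)) : ℂ)
      = Complex.exp (((2*Real.pi*(lam 0 - lam' 0)*t : ℝ)) * Complex.I) := by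
    intro t
    rw [RCLike.inner_apply']
    unfold expFn
    rw [← Complex.exp_conj, ← Complex.exp_add]
    congr 1
    rw [map_mul, Complex.conj_I]
    rw [Complex.conj_ofReal]
    rw [inner_pt, inner_pt]
    push_cast
    ring
  simp_rw [hpt]
  rw [MeasureTheory.integral_Icc_eq_integral_Ioc,
    ← intervalIntegral.integral_of_le (zero_le_one)]
  rfl

-- ===== density criterion =====

lemma dense_iff (Λ : Set Plane) :
    (Submodule.span ℂ (Set.range (fun lam : Λ => expLp muRB lam))).topologicalClosure = ⊤ ↔
      ∀ f : Lp ℂ 2 muRB, (∀ lam ∈ Λ, (inner ℂ (expLp muRB lam) f : ℂ) = 0) → f = 0 := by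
  rw [Submodule.topologicalClosure_eq_top_iff]
  constructor
  · intro h f hf
    have hforth : f ∈ (Submodule.span ℂ (Set.range (fun lam : Λ => expLp muRB lam)))ᗮ := by
      rw [Submodule.mem_orthogonal']
      intro u hu
      have hle : Submodule.span ℂ (Set.range (fun lam : Λ => expLp muRB lam)) ≤
          LinearMap.ker ((innerSL ℂ f : Lp ℂ 2 muRB →L[ℂ] ℂ) : Lp ℂ 2 muRB →ₗ[ℂ] ℂ) := by
        rw [Submodule.span_le]
        rintro _ ⟨lam, rfl⟩
        simp only [SetLike.mem_coe, LinearMap.mem_ker, ContinuousLinearMap.coe_coe, innerSL_apply_apply]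
        rw [inner_eq_zero_symm]
        exact hf lam lam.2
      simpa using hle hu
    rw [h] at hforth
    simpa using hforth
  · intro h
    rw [Submodule.eq_bot_iff]
    intro f hforth
    apply h
    intro lam hlam
    exact Submodule.inner_right_of_mem_orthogonal
      (Submodule.subset_span (Set.mem_range_self (⟨lam, hlam⟩ : Λ))) hforth

-- ===== completeness via Fourier series =====

lemma pt_zero (a b : ℝ) : pt a b 0 = a := by simp [pt]
lemma pt_one (a b : ℝ) : pt a b 1 = b := by simp [pt]

lemma conj_expFn_pt (lam : Plane) (t : ℝ) :
    (starRingEnd ℂ) (expFn lam (pt t 0))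
      = Complex.exp (((2*Real.pi*(lam 0)*t : ℝ)) * Complex.I) := by
  unfold expFn
  rw [← Complex.exp_conj, map_mul, Complex.conj_ofReal, Complex.conj_I, inner_pt]
  congr 1; push_cast; ring

instance : Fact ((0:ℝ) < 1) := ⟨zero_lt_one⟩

lemma mp1 : MeasurePreserving (fun x : ℝ => (x : AddCircle (1:ℝ)))
    (volume.restrict (Set.Ioc (0:ℝ) 1)) (AddCircle.haarAddCircle) := by
  have h := AddCircle.measurePreserving_mk 1 0
  rw [zero_add] at h
  have hv : (volume : Measure (AddCircle (1:ℝ))) = AddCircle.haarAddCircle := by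
    rw [AddCircle.volume_eq_smul_haarAddCircle]; simp
  rwa [hv] at h

lemma complete_aux (β : ℤ → ℝ) (f : Lp ℂ 2 muRB)
    (hf : ∀ n : ℤ, (inner ℂ (expLp muRB (pt (n:ℝ) (β n))) f : ℂ) = 0) : f = 0 := by
  classical
  set ν := volume.restrict (Set.Icc (0:ℝ) 1) with hν
  have hIoc : volume.restrict (Set.Ioc (0:ℝ) 1) = ν := MeasureTheory.restrict_Ioc_eq_restrict_Icc
  have hsm := (MeasureTheory.Lp.aestronglyMeasurable f)
  set f' : Plane → ℂ := hsm.mk f with hf'def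
  have hf'sm : StronglyMeasurable f' := hsm.stronglyMeasurable_mk
  have hff' : (f : Plane → ℂ) =ᵐ[muRB] f' := hsm.ae_eq_mk
  set g : ℝ → ℂ := fun t => f' (pt t 0) with hgdef
  have hgm : Measurable g := hf'sm.measurable.comp measurable_pt0
  have hmpφ : MeasurePreserving (fun x : ℝ => pt x 0) ν muRB := ⟨measurable_pt0, muRB_eq.symm⟩
  -- Step 1: the integrals of g against the exponentials vanish
  have hinner : ∀ n : ℤ,
      (∫ t, Complex.exp (((2*Real.pi*(n:ℝ)*t : ℝ)) * Complex.I) * g t ∂ν) = 0 := by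
    intro n
    have h := hf n
    rw [MeasureTheory.L2.inner_def] at h
    have hcongr : (fun x => (inner ℂ ((expLp muRB (pt (n:ℝ) (β n)) : Lp ℂ 2 muRB) x)
          ((f : Plane → ℂ) x) : ℂ))
        =ᵐ[muRB] fun x => (starRingEnd ℂ) (expFn (pt (n:ℝ) (β n)) x) * f' x := by
      filter_upwards [coeFn_expLp (pt (n:ℝ) (β n)), hff'] with x hx hx'
      rw [hx, hx', RCLike.inner_apply']
    rw [integral_congr_ae hcongr] at h
    have hmeas : AEStronglyMeasurable
        (fun x : Plane => (starRingEnd ℂ) (expFn (pt (n:ℝ) (β n)) x) * f' x) muRB :=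
      ((Complex.continuous_conj.comp (continuous_expFn _)).aestronglyMeasurable).mul
        hf'sm.aestronglyMeasurable
    rw [muRB_eq] at h hmeas
    rw [integral_map measurable_pt0.aemeasurable hmeas] at h
    rw [← h]
    refine integral_congr_ae (Eventually.of_forall fun t => ?_)
    simp only [conj_expFn_pt, pt_zero, hgdef]
  -- Step 2: transfer to the circle
  set G : AddCircle (1:ℝ) → ℂ := AddCircle.liftIoc (1:ℝ) 0 g with hGdef
  have hGm : Measurable G := by
    have h1 : Measurable fun y : AddCircle (1:ℝ) => ((AddCircle.equivIoc 1 0 y : ℝ)) :=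
      measurable_subtype_coe.comp (AddCircle.measurableEquivIoc (1:ℝ) 0).measurable
    exact hgm.comp h1
  have hGg : ∀ᵐ x : ℝ ∂(volume.restrict (Set.Ioc (0:ℝ) 1)), G (x : AddCircle (1:ℝ)) = g x := by
    filter_upwards [ae_restrict_mem measurableSet_Ioc] with x hx
    exact AddCircle.liftIoc_coe_apply (by rwa [zero_add])
  have hg2 : MemLp g 2 ν :=
    ((MeasureTheory.Lp.memLp f).ae_eq hff').comp_measurePreserving hmpφ
  have hG2 : MemLp G 2 AddCircle.haarAddCircle := by
    rw [← mp1.map_eq]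
    rw [memLp_map_measure_iff (hGm.stronglyMeasurable.aestronglyMeasurable)
      AddCircle.measurable_mk'.aemeasurable]
    rw [hIoc] at hGg ⊢
    exact hg2.ae_eq (hGg.mono fun x hx => hx.symm)
  -- Step 3: the Fourier coefficients of G vanish
  have hcoeff : ∀ n : ℤ, fourierCoeff G n = 0 := by
    intro n
    rw [fourierCoeff, ← mp1.map_eq]
    have hmeasF : AEStronglyMeasurable (fun t : AddCircle (1:ℝ) => fourier (-n) t • G t)
        (Measure.map (fun x : ℝ => (x : AddCircle (1:ℝ))) (volume.restrict (Set.Ioc (0:ℝ) 1))) := by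
      rw [mp1.map_eq]
      exact ((map_continuous (fourier (-n))).aestronglyMeasurable).smul
        (hGm.stronglyMeasurable.aestronglyMeasurable)
    rw [integral_map AddCircle.measurable_mk'.aemeasurable hmeasF]
    have h0 : (∫ x : ℝ in Set.Ioc (0:ℝ) 1, fourier (-n) (x : AddCircle (1:ℝ)) • G (x : AddCircle (1:ℝ)) ∂volume)
        = ∫ t, Complex.exp (((2*Real.pi*((-n : ℤ):ℝ)*t : ℝ)) * Complex.I) * g t ∂ν := by
      rw [hIoc]
      apply integral_congr_ae
      rw [← hIoc]
      filter_upwards [hGg] with x hx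
      rw [hx, fourier_coe_apply]
      rw [smul_eq_mul]
      congr 2
      push_cast
      ring
    rw [h0, hinner (-n)]
  -- Step 4: G = 0 a.e.
  set Gp : Lp ℂ 2 (AddCircle.haarAddCircle (T := 1)) := hG2.toLp G with hGpdef
  have hGp0 : Gp = 0 := by
    apply fourierBasis.repr.injective
    rw [map_zero]
    apply Subtype.ext
    funext n
    rw [fourierBasis_repr]
    have : fourierCoeff (⇑Gp) n = fourierCoeff G n := by
      apply integral_congr_ae
      filter_upwards [hG2.coeFn_toLp] with x hx
      rw [hx]
    rw [this, hcoeff]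
    rfl
  have hGae : ∀ᵐ y ∂(AddCircle.haarAddCircle (T := 1)), G y = 0 := by
    have h1 : (⇑Gp : AddCircle (1:ℝ) → ℂ) =ᵐ[AddCircle.haarAddCircle] 0 := by
      rw [hGp0] at *
      exact MeasureTheory.Lp.coeFn_zero ℂ 2 _
    filter_upwards [hG2.coeFn_toLp, h1] with y hy hy'
    rw [← hy]
    exact hy'
  -- Step 5: pull back to ℝ and then to the plane
  have hgae : ∀ᵐ t ∂ν, g t = 0 := by
    rw [← hIoc]
    have hset : MeasurableSet {y : AddCircle (1:ℝ) | G y = 0} := hGm (measurableSet_singleton 0)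
    have h2 : ∀ᵐ x : ℝ ∂(volume.restrict (Set.Ioc (0:ℝ) 1)), G (x : AddCircle (1:ℝ)) = 0 := by
      rw [← mp1.map_eq] at hGae
      exact (ae_map_iff AddCircle.measurable_mk'.aemeasurable hset).1 hGae
    filter_upwards [hGg, h2] with x hx hx'
    rw [← hx]; exact hx'
  have hf'ae : ∀ᵐ x ∂muRB, f' x = 0 := by
    rw [muRB_eq]
    have hset : MeasurableSet {x : Plane | f' x = 0} :=
      hf'sm.measurable (measurableSet_singleton 0)
    rw [ae_map_iff measurable_pt0.aemeasurable hset]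
    exact hgae
  rw [MeasureTheory.Lp.eq_zero_iff_ae_eq_zero]
  exact hff'.trans hf'ae

end

end SpecAux

/-- A set `Λ ∋ 0` is a spectrum of `μ_{R,B}` iff
`Λ = {(n, β(n)) : n ∈ ℤ}` for some `β : ℤ → ℝ` with `β 0 = 0`. -/
theorem isSpectrum_muRB_iff (Λ : Set Plane) (h0 : (0 : Plane) ∈ Λ) :
    IsSpectrum muRB Λ ↔
      ∃ β : ℤ → ℝ, β 0 = 0 ∧ Λ = Set.range fun n : ℤ => pt (n : ℝ) (β n) := by
  have hzero0 : (0 : Plane) 0 = 0 := rfl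
  have hpt_ext : ∀ (lam : Plane) (a b : ℝ), lam 0 = a → lam 1 = b → pt a b = lam := by
    intro lam a b ha hb
    ext i
    fin_cases i
    · exact ha.symm
    · exact hb.symm
  constructor
  · rintro ⟨horth, hdense⟩
    have hK : ∀ lam ∈ Λ, ∀ lam' ∈ Λ, lam ≠ lam' → ∃ m : ℤ, m ≠ 0 ∧ lam 0 - lam' 0 = m := by
      intro lam hl lam' hl' hne
      have h2 : (inner ℂ (expLp muRB lam) (expLp muRB lam') : ℂ) = 0 :=
        horth.2 (i := ⟨lam, hl⟩) (j := ⟨lam', hl'⟩)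
          (fun h => hne (congrArg Subtype.val h))
      rw [SpecAux.inner_expLp] at h2
      exact SpecAux.K_eq_zero_iff.1 h2
    have hinj : ∀ lam ∈ Λ, ∀ lam' ∈ Λ, lam 0 = lam' 0 → lam = lam' := by
      intro lam hl lam' hl' he
      by_contra hne
      obtain ⟨m, hm0, hm⟩ := hK lam hl lam' hl' hne
      rw [he, sub_self] at hm
      exact hm0 (by simpa using hm.symm)
    have hint : ∀ lam ∈ Λ, ∃ m : ℤ, lam 0 = (m : ℝ) := by
      intro lam hl
      rcases eq_or_ne lam 0 with rfl | hne
      · exact ⟨0, by rw [hzero0]; norm_num⟩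
      · obtain ⟨m, _, hm⟩ := hK lam hl 0 h0 hne
        rw [hzero0, sub_zero] at hm
        exact ⟨m, hm⟩
    have hsurj : ∀ n : ℤ, ∃ lam ∈ Λ, lam 0 = (n : ℝ) := by
      intro n
      by_contra hns
      push_neg at hns
      rw [SpecAux.dense_iff] at hdense
      have hzero := hdense (expLp muRB (pt (n:ℝ) 0)) ?_
      · have h1 : (inner ℂ (expLp muRB (pt (n:ℝ) 0)) (expLp muRB (pt (n:ℝ) 0)) : ℂ) = 1 := by
          rw [SpecAux.inner_expLp, sub_self, SpecAux.K_zero]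
        rw [hzero] at h1
        simp at h1
      · intro lam hlam
        rw [SpecAux.inner_expLp, SpecAux.pt_zero]
        obtain ⟨m, hm⟩ := hint lam hlam
        have hmn : m ≠ n := fun h => hns lam hlam (by rw [hm, h])
        rw [SpecAux.K_eq_zero_iff]
        refine ⟨m - n, sub_ne_zero.mpr hmn, ?_⟩
        rw [hm]
        push_cast
        ring
    choose lamf hlamf1 hlamf2 using hsurj
    refine ⟨fun n => lamf n 1, ?_, ?_⟩
    · have h00 : lamf 0 = 0 :=
        hinj _ (hlamf1 0) 0 h0 (by rw [hlamf2 0, hzero0]; norm_num)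
      show lamf 0 1 = 0
      rw [h00]
      rfl
    · ext lam
      simp only [Set.mem_range]
      constructor
      · intro hl
        obtain ⟨m, hm⟩ := hint lam hl
        refine ⟨m, ?_⟩
        have heq := hinj (lamf m) (hlamf1 m) lam hl (by rw [hlamf2 m, hm])
        rw [← heq]
        exact hpt_ext (lamf m) _ _ (hlamf2 m) rfl
      · rintro ⟨m, rfl⟩
        rw [hpt_ext (lamf m) _ _ (hlamf2 m) rfl]
        exact hlamf1 m
  · rintro ⟨β, hβ0, rfl⟩
    constructor
    · classical
      rw [orthonormal_iff_ite]
      rintro ⟨a, ha⟩ ⟨b, hb⟩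
      obtain ⟨m, rfl⟩ := ha
      obtain ⟨n, rfl⟩ := hb
      show (inner ℂ (expLp muRB (pt (m:ℝ) (β m))) (expLp muRB (pt (n:ℝ) (β n))) : ℂ) = _
      by_cases hmn : m = n
      · subst hmn
        rw [if_pos rfl, SpecAux.inner_expLp, sub_self, SpecAux.K_zero]
      · have hne : (⟨pt (m:ℝ) (β m), Set.mem_range_self m⟩ :
            Set.range fun n : ℤ => pt (n : ℝ) (β n)) ≠ ⟨pt (n:ℝ) (β n), Set.mem_range_self n⟩ := by
          intro h
          apply hmn
          have h2 := congrArg (fun v : Plane => v 0) (congrArg Subtype.val h)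
          simp only [SpecAux.pt_zero] at h2
          exact_mod_cast h2
        rw [if_neg hne, SpecAux.inner_expLp, SpecAux.pt_zero, SpecAux.pt_zero]

        rw [SpecAux.K_eq_zero_iff]
        exact ⟨m - n, sub_ne_zero.mpr hmn, by push_cast; ring⟩
    · rw [SpecAux.dense_iff]
      intro f hf
      apply SpecAux.complete_aux β f
      intro n
      exact hf _ (Set.mem_range_self n)
end

section
/- Let μ = μ_{R,B} be the self-affine measure for R = [[2,1],[0,2]] and B = {(0,0),(1,0)}, and define β : ℤ → ℝ by β(n) = sgn(n)·2^{|n|} (so β(0) = 0). Then Λ_β = {(n, β(n)) : n ∈ ℤ} is a spectrum of μ with dim_Be(Λ_β) = 0. In particular, there exists a spectrum of μ with Beurling dimension zero. -/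
open MeasureTheory Filter Set Metric
open scoped ENNReal

noncomputable section Aux

open Real

instance fact01 : Fact ((0:ℝ) < 1) := ⟨one_pos⟩

lemma pt_apply0 (a b : ℝ) : pt a b 0 = a := rfl
lemma pt_apply1 (a b : ℝ) : pt a b 1 = b := rfl

/-- Projection of the plane to the circle. -/
def Qmap : Plane → AddCircle (1:ℝ) := fun y => ((y 0 : ℝ) : AddCircle (1:ℝ))

lemma measurable_Qmap : Measurable Qmap :=
  AddCircle.measurable_mk'.comp ((measurable_pi_apply 0).comp (WithLp.measurable_ofLp 2 _))

lemma restrict_Icc_eq_Ioc :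
    volume.restrict (Set.Icc (0:ℝ) 1) = volume.restrict (Set.Ioc (0:ℝ) 1) :=
  (Measure.restrict_congr_set Ioc_ae_eq_Icc).symm

lemma haar_eq_volume :
    (AddCircle.haarAddCircle : Measure (AddCircle (1:ℝ))) = volume := by
  rw [AddCircle.volume_eq_smul_haarAddCircle]
  simp

lemma hQ : MeasurePreserving Qmap muRB AddCircle.haarAddCircle := by
  refine ⟨measurable_Qmap, ?_⟩
  rw [muRB, Measure.map_map measurable_Qmap measurable_pt0]
  have h1 : (Qmap ∘ fun x : ℝ => pt x 0) = fun x : ℝ => ((x : ℝ) : AddCircle (1:ℝ)) := rfl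
  rw [h1, restrict_Icc_eq_Ioc, haar_eq_volume]
  have := (AddCircle.measurePreserving_mk (T := 1) 0).map_eq
  rwa [zero_add] at this

/-- A measurable section of the circle into the plane. -/
def repmap : AddCircle (1:ℝ) → ℝ := fun z => ((AddCircle.measurableEquivIoc 1 0 z : ℝ))

lemma measurable_repmap : Measurable repmap :=
  measurable_subtype_coe.comp (AddCircle.measurableEquivIoc 1 0).measurable

lemma repmap_coe {x : ℝ} (hx : x ∈ Set.Ioc (0:ℝ) 1) : repmap ((x : AddCircle (1:ℝ))) = x := by
  have hx' : x ∈ Set.Ioc (0:ℝ) (0 + 1) := by rwa [zero_add]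
  have h : (AddCircle.equivIoc 1 0) ((x : AddCircle (1:ℝ))) = ⟨x, hx'⟩ := by
    rw [Equiv.apply_eq_iff_eq_symm_apply]; rfl
  show ((AddCircle.measurableEquivIoc 1 0 ((x : AddCircle (1:ℝ))) : ℝ)) = x
  have h2 : AddCircle.measurableEquivIoc 1 0 ((x : AddCircle (1:ℝ)))
      = (AddCircle.equivIoc 1 0) ((x : AddCircle (1:ℝ))) := rfl
  rw [h2, h]

def Smap : AddCircle (1:ℝ) → Plane := fun z => pt (repmap z) 0

lemma measurable_Smap : Measurable Smap :=
  measurable_pt0.comp measurable_repmap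

lemma map_repmap : Measure.map repmap (AddCircle.haarAddCircle) = volume.restrict (Set.Ioc (0:ℝ) 1) := by
  have hmk := (AddCircle.measurePreserving_mk (T := 1) 0)
  rw [haar_eq_volume, ← hmk.map_eq, Measure.map_map measurable_repmap AddCircle.measurable_mk']
  have : (repmap ∘ fun x : ℝ => ((x : ℝ) : AddCircle (1:ℝ))) =ᵐ[volume.restrict (Set.Ioc (0:ℝ) (0+1))] id := by
    filter_upwards [ae_restrict_mem measurableSet_Ioc] with x hx
    rw [zero_add] at hx
    exact repmap_coe hx
  rw [Measure.map_congr this, Measure.map_id, zero_add]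

lemma hS : MeasurePreserving Smap AddCircle.haarAddCircle muRB := by
  refine ⟨measurable_Smap, ?_⟩
  have : Smap = (fun x : ℝ => pt x 0) ∘ repmap := rfl
  rw [this, ← Measure.map_map measurable_pt0 measurable_repmap, map_repmap, muRB,
    restrict_Icc_eq_Ioc]

lemma hSQ : ∀ᵐ y ∂muRB, Smap (Qmap y) = y := by
  rw [muRB, ae_map_iff measurable_pt0.aemeasurable]
  · rw [restrict_Icc_eq_Ioc]
    filter_upwards [ae_restrict_mem measurableSet_Ioc] with x hx
    show Smap (Qmap (pt x 0)) = pt x 0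
    have : Qmap (pt x 0) = ((x : ℝ) : AddCircle (1:ℝ)) := rfl
    rw [this]
    show pt (repmap _) 0 = pt x 0
    rw [repmap_coe hx]
  · exact measurableSet_eq_fun (measurable_Smap.comp measurable_Qmap) measurable_id

end Aux
noncomputable section Aux2

open Real

/-- Composition with `Qmap`, as a linear isometry `L²(haar) → L²(μ)`. -/
def Tq : Lp ℂ 2 (AddCircle.haarAddCircle (T := 1)) →ₗᵢ[ℂ] Lp ℂ 2 muRB :=
  MeasureTheory.Lp.compMeasurePreservingₗᵢ ℂ Qmap hQ

/-- Composition with `Smap`, as a linear isometry `L²(μ) → L²(haar)`. -/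
def Ts : Lp ℂ 2 muRB →ₗᵢ[ℂ] Lp ℂ 2 (AddCircle.haarAddCircle (T := 1)) :=
  MeasureTheory.Lp.compMeasurePreservingₗᵢ ℂ Smap hS

lemma coeFn_Tq (g : Lp ℂ 2 (AddCircle.haarAddCircle (T := 1))) :
    Tq g =ᵐ[muRB] g ∘ Qmap :=
  MeasureTheory.Lp.coeFn_compMeasurePreserving g hQ

lemma coeFn_Ts (g : Lp ℂ 2 muRB) :
    Ts g =ᵐ[AddCircle.haarAddCircle (T := 1)] g ∘ Smap :=
  MeasureTheory.Lp.coeFn_compMeasurePreserving g hS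

lemma Tq_Ts (g : Lp ℂ 2 muRB) : Tq (Ts g) = g := by
  apply MeasureTheory.Lp.ext
  have h1 : Tq (Ts g) =ᵐ[muRB] (Ts g : AddCircle (1:ℝ) → ℂ) ∘ Qmap := coeFn_Tq _
  have h2 : ((Ts g : AddCircle (1:ℝ) → ℂ) ∘ Qmap : Plane → ℂ)
      =ᵐ[muRB] ((g : Plane → ℂ) ∘ Smap) ∘ Qmap := by
    apply ae_eq_comp (measurable_Qmap.aemeasurable)
    rw [hQ.map_eq]
    exact coeFn_Ts g
  have h3 : (((g : Plane → ℂ) ∘ Smap) ∘ Qmap : Plane → ℂ) =ᵐ[muRB] g := by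
    filter_upwards [hSQ] with y hy
    simp only [Function.comp_apply, hy]
  exact (h1.trans h2).trans h3

end Aux2
noncomputable section Aux3

open Real

/-- The lattice-point map `n ↦ (n, sgn n · 2^{|n|})`. -/
def gmap (n : ℤ) : Plane := pt (n : ℝ) (isgn n * 2 ^ n.natAbs)

lemma gmap_injective : Function.Injective gmap := by
  intro n m h
  have h0 : (n : ℝ) = (m : ℝ) := by
    have := congrArg (fun y : Plane => y 0) h
    simpa [gmap, pt_apply0] using this
  exact_mod_cast h0

lemma ae_coord1 : ∀ᵐ y ∂muRB, y 1 = 0 := by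
  rw [muRB, ae_map_iff measurable_pt0.aemeasurable]
  · exact Eventually.of_forall fun x => rfl
  · have hm : Measurable fun y : Plane => y 1 := (measurable_pi_apply 1).comp (WithLp.measurable_ofLp 2 _)
    exact measurableSet_eq_fun hm measurable_const

lemma expLp_eq (n : ℤ) :
    expLp muRB (gmap n) = Tq (fourierLp 2 (-n)) := by
  apply MeasureTheory.Lp.ext
  have h1 : expLp muRB (gmap n) =ᵐ[muRB] expFn (gmap n) :=
    (expFn_memLp muRB (gmap n)).coeFn_toLp
  have h2 : Tq (fourierLp 2 (-n)) =ᵐ[muRB]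
      (fourierLp (T := 1) 2 (-n) : AddCircle (1:ℝ) → ℂ) ∘ Qmap := coeFn_Tq _
  have h3 : ((fourierLp (T := 1) 2 (-n) : AddCircle (1:ℝ) → ℂ) ∘ Qmap : Plane → ℂ)
      =ᵐ[muRB] (fun y : Plane => fourier (-n) (Qmap y)) := by
    apply ae_eq_comp (measurable_Qmap.aemeasurable)
    rw [hQ.map_eq]
    exact coeFn_fourierLp 2 (-n)
  have h4 : (fun y : Plane => fourier (-n) (Qmap y)) =ᵐ[muRB] expFn (gmap n) := by
    filter_upwards [ae_coord1] with y hy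
    have hinner : (inner ℝ (gmap n) y : ℝ) = (n : ℝ) * y 0 := by
      simp only [PiLp.inner_apply, RCLike.inner_apply, Fin.sum_univ_two, conj_trivial,
        gmap, pt_apply0, pt_apply1, hy, mul_zero, add_zero]
      ring
    show fourier (-n) ((y 0 : ℝ) : AddCircle (1:ℝ)) = expFn (gmap n) y
    rw [fourier_coe_apply]
    unfold expFn
    rw [hinner]
    congr 1
    push_cast
    ring
  exact h1.trans ((h2.trans (h3.trans h4)).symm)

lemma orthonormal_gmap : Orthonormal ℂ (fun n : ℤ => expLp muRB (gmap n)) := by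
  have h1 : Orthonormal ℂ (fourierLp (T := 1) 2) := orthonormal_fourier
  have h2 : Orthonormal ℂ (fun n : ℤ => fourierLp (T := 1) 2 (-n)) :=
    h1.comp _ neg_injective
  have h3 := h2.comp_linearIsometry Tq
  have h4 : (Tq ∘ fun n : ℤ => fourierLp (T := 1) 2 (-n))
      = fun n : ℤ => expLp muRB (gmap n) := by
    funext n
    rw [Function.comp_apply, expLp_eq]
  rwa [h4] at h3

lemma dense_gmap :
    (Submodule.span ℂ (Set.range (fun n : ℤ => expLp muRB (gmap n)))).topologicalClosure = ⊤ := by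
  rw [Submodule.topologicalClosure_eq_top_iff, Submodule.eq_bot_iff]
  intro g hg
  have hcoef : ∀ m : ℤ, (inner ℂ (fourierLp (T := 1) 2 m) (Ts g) : ℂ) = 0 := by
    intro m
    have h1 : (inner ℂ (Tq (fourierLp (T := 1) 2 m)) (Tq (Ts g)) : ℂ)
        = inner ℂ (fourierLp (T := 1) 2 m) (Ts g) := Tq.inner_map_map _ _
    rw [← h1, Tq_Ts]
    have hmem : Tq (fourierLp (T := 1) 2 m)
        ∈ Submodule.span ℂ (Set.range (fun n : ℤ => expLp muRB (gmap n))) := by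
      apply Submodule.subset_span
      refine ⟨-m, ?_⟩
      show expLp muRB (gmap (-m)) = _
      rw [expLp_eq, neg_neg]
    exact (Submodule.mem_orthogonal _ g).1 hg _ hmem
  have hbot : (Submodule.span ℂ (Set.range (fourierLp (T := 1) 2)))ᗮ = ⊥ := by
    rw [← Submodule.topologicalClosure_eq_top_iff]
    exact span_fourierLp_closure_eq_top (by norm_num)
  have hmem : Ts g ∈ (Submodule.span ℂ (Set.range (fourierLp (T := 1) 2)))ᗮ := by
    rw [Submodule.mem_orthogonal]
    intro u hu
    induction hu using Submodule.span_induction with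
    | mem u hu => obtain ⟨m, rfl⟩ := hu; exact hcoef m
    | zero => exact inner_zero_left _
    | add u v _ _ hu hv => rw [inner_add_left, hu, hv, add_zero]
    | smul c u _ hu => rw [inner_smul_left, hu, mul_zero]
  rw [hbot, Submodule.mem_bot] at hmem
  have : g = Tq (Ts g) := (Tq_Ts g).symm
  rw [this, hmem, map_zero]

end Aux3
noncomputable section Aux4

lemma isSpectrum_range_gmap : IsSpectrum muRB (Set.range gmap) := by
  have hfam : (fun lam : ↥(Set.range gmap) => expLp muRB (lam : Plane))
      = (fun n : ℤ => expLp muRB (gmap n)) ∘ (Equiv.ofInjective gmap gmap_injective).symm := by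
    funext lam
    rw [Function.comp_apply]
    congr 1
    exact (Equiv.apply_ofInjective_symm gmap_injective lam).symm
  constructor
  · show Orthonormal ℂ (fun lam : ↥(Set.range gmap) => expLp muRB (lam : Plane))
    rw [hfam]
    exact orthonormal_gmap.comp _ (Equiv.ofInjective gmap gmap_injective).symm.injective
  · have hr : Set.range (fun lam : ↥(Set.range gmap) => expLp muRB (lam : Plane))
        = Set.range (fun n : ℤ => expLp muRB (gmap n)) := by
      rw [hfam, Function.Surjective.range_comp (Equiv.ofInjective gmap gmap_injective).symm.surjective]
    show (Submodule.span ℂ (Set.range (fun lam : ↥(Set.range gmap) =>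
        expLp muRB (lam : Plane)))).topologicalClosure = ⊤
    rw [hr]
    exact dense_gmap

end Aux4
noncomputable section Aux5

open Real

lemma abs_coord_le_dist (y z : Plane) (i : Fin 2) : |y i - z i| ≤ dist y z := by
  rw [EuclideanSpace.dist_eq]
  have h1 : |y i - z i| = Real.sqrt (dist (y i) (z i) ^ 2) := by
    rw [Real.sqrt_sq_eq_abs, abs_of_nonneg dist_nonneg, Real.dist_eq]
  rw [h1]
  exact Real.sqrt_le_sqrt (Finset.single_le_sum
    (f := fun j => dist (y j) (z j) ^ 2) (fun j _ => sq_nonneg _) (Finset.mem_univ i))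

lemma gmap_coord1 (n : ℤ) : gmap n 1 = isgn n * 2 ^ n.natAbs := rfl

lemma isgn_abs {p : ℤ} (hp : p ≠ 0) : |isgn p| = 1 := by
  rcases lt_trichotomy p 0 with h | h | h
  · rw [isgn, Int.sign_eq_neg_one_of_neg h]; norm_num
  · exact absurd h hp
  · rw [isgn, Int.sign_eq_one_of_pos h]; norm_num

lemma gmap_eq_of_large {h : ℝ} {x : Plane} {K : ℕ} (h2K : 2 * h ≤ 2 ^ (K + 1))
    {n m : ℤ} (hs : n.sign = m.sign)
    (hn : K < n.natAbs) (hm : K < m.natAbs)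
    (hbn : gmap n ∈ Metric.ball x h) (hbm : gmap m ∈ Metric.ball x h) : n = m := by
  have key : ∀ p q : ℤ, p.sign = q.sign → K < p.natAbs → p.natAbs < q.natAbs →
      gmap p ∈ Metric.ball x h → gmap q ∈ Metric.ball x h → False := by
    intro p q hspq hKp hpq hbp hbq
    have hdist : dist (gmap p) (gmap q) < 2 * h := by
      rw [mem_ball] at hbp hbq
      calc dist (gmap p) (gmap q) ≤ dist (gmap p) x + dist x (gmap q) := dist_triangle _ _ _
        _ < h + h := add_lt_add hbp (by rw [dist_comm]; exact hbq)
        _ = 2 * h := by ring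
    have hcoord : |gmap p 1 - gmap q 1| ≤ dist (gmap p) (gmap q) := abs_coord_le_dist _ _ 1
    have hp0 : p ≠ 0 := by
      intro h0
      rw [h0] at hKp
      simp at hKp
    have hsval : isgn p = isgn q := by rw [isgn, isgn, hspq]
    have hpowle : (2:ℝ) ^ p.natAbs ≤ 2 ^ q.natAbs :=
      pow_le_pow_right₀ one_le_two hpq.le
    have habs : |gmap p 1 - gmap q 1| = 2 ^ q.natAbs - 2 ^ p.natAbs := by
      rw [gmap_coord1, gmap_coord1, ← hsval, ← mul_sub, abs_mul, isgn_abs hp0, one_mul,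
        abs_sub_comm, abs_of_nonneg (by linarith)]
    have hKp1 : (2:ℝ) ^ (K + 1) ≤ 2 ^ p.natAbs :=
      pow_le_pow_right₀ one_le_two (by omega)
    have hq2p : (2:ℝ) ^ p.natAbs * 2 ≤ 2 ^ q.natAbs := by
      calc (2:ℝ) ^ p.natAbs * 2 = 2 ^ (p.natAbs + 1) := by ring
        _ ≤ 2 ^ q.natAbs := pow_le_pow_right₀ one_le_two (by omega)
    have : (2:ℝ) ^ (K + 1) ≤ |gmap p 1 - gmap q 1| := by
      rw [habs]; linarith
    linarith [hcoord.trans_lt hdist]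
  rcases lt_trichotomy n.natAbs m.natAbs with hlt | heq | hgt
  · exact absurd (key n m hs hn hlt hbn hbm) not_false
  · have h1 : n.sign * (n.natAbs : ℤ) = m.sign * (m.natAbs : ℤ) := by rw [hs, heq]
    rwa [Int.sign_mul_natAbs, Int.sign_mul_natAbs] at h1
  · exact absurd (key m n hs.symm hm hgt hbm hbn) not_false

lemma encard_ball_le {h : ℝ} (hh : 1 ≤ h) (x : Plane) :
    ((Set.range gmap) ∩ Metric.ball x h).encard
      ≤ ((2 * (Nat.floor (Real.logb 2 h) + 1) + 3 : ℕ) : ℕ∞) := by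
  set K := Nat.floor (Real.logb 2 h) + 1 with hK
  have hh0 : (0:ℝ) < h := by linarith
  have hhK : h < 2 ^ K := by
    have h1 : Real.logb 2 h < (K : ℝ) := by
      have := Nat.lt_floor_add_one (Real.logb 2 h)
      rw [hK]; push_cast; linarith
    calc h = (2:ℝ) ^ (Real.logb 2 h) := (Real.rpow_logb two_pos (by norm_num) hh0).symm
      _ < 2 ^ (K : ℝ) := Real.rpow_lt_rpow_left_iff one_lt_two |>.2 h1
      _ = 2 ^ K := by rw [Real.rpow_natCast]
  have h2K : 2 * h ≤ 2 ^ (K + 1) := by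
    have : (2:ℝ) ^ (K + 1) = 2 * 2 ^ K := by ring
    linarith
  set A := {n : ℤ | gmap n ∈ Metric.ball x h} with hA
  have himg : (Set.range gmap) ∩ Metric.ball x h = gmap '' A := by
    ext y
    constructor
    · rintro ⟨⟨n, rfl⟩, hy⟩; exact ⟨n, hy, rfl⟩
    · rintro ⟨n, hn, rfl⟩; exact ⟨⟨n, rfl⟩, hn⟩
  rw [himg]
  refine le_trans (Set.encard_image_le _ _) ?_
  have hsub : A ⊆ (Set.Icc (-(K:ℤ)) (K:ℤ)) ∪ ((A ∩ Set.Ioi (K:ℤ)) ∪ (A ∩ Set.Iio (-(K:ℤ)))) := by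
    intro n hn
    rcases le_or_gt n (K:ℤ) with h1 | h1
    · rcases le_or_gt (-(K:ℤ)) n with h2 | h2
      · exact Or.inl ⟨h2, h1⟩
      · exact Or.inr (Or.inr ⟨hn, h2⟩)
    · exact Or.inr (Or.inl ⟨hn, h1⟩)
  refine le_trans (Set.encard_mono hsub) ?_
  refine le_trans (Set.encard_union_le _ _) ?_
  have h1 : (Set.Icc (-(K:ℤ)) (K:ℤ)).encard = ((2 * K + 1 : ℕ) : ℕ∞) := by
    rw [← Finset.coe_Icc, Set.encard_coe_eq_coe_finsetCard, Int.card_Icc]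
    congr 1
    omega
  have h2 : (A ∩ Set.Ioi (K:ℤ)).encard ≤ 1 := by
    rw [Set.encard_le_one_iff]
    rintro a b ⟨ha, ha'⟩ ⟨hb, hb'⟩
    rw [Set.mem_Ioi] at ha' hb'
    have hapos : 0 < a := by omega
    have hbpos : 0 < b := by omega
    exact gmap_eq_of_large h2K
      (by rw [Int.sign_eq_one_of_pos hapos, Int.sign_eq_one_of_pos hbpos])
      (by omega) (by omega) ha hb
  have h3 : (A ∩ Set.Iio (-(K:ℤ))).encard ≤ 1 := by
    rw [Set.encard_le_one_iff]
    rintro a b ⟨ha, ha'⟩ ⟨hb, hb'⟩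
    rw [Set.mem_Iio] at ha' hb'
    have haneg : a < 0 := by omega
    have hbneg : b < 0 := by omega
    exact gmap_eq_of_large h2K
      (by rw [Int.sign_eq_neg_one_of_neg haneg, Int.sign_eq_neg_one_of_neg hbneg])
      (by omega) (by omega) ha hb
  calc (Set.Icc (-(K:ℤ)) (K:ℤ)).encard + ((A ∩ Set.Ioi (K:ℤ)) ∪ (A ∩ Set.Iio (-(K:ℤ)))).encard
      ≤ ((2 * K + 1 : ℕ) : ℕ∞) + ((A ∩ Set.Ioi (K:ℤ)).encard + (A ∩ Set.Iio (-(K:ℤ))).encard) := by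
        rw [h1]
        exact add_le_add le_rfl (Set.encard_union_le _ _)
    _ ≤ ((2 * K + 1 : ℕ) : ℕ∞) + (1 + 1) := add_le_add le_rfl (add_le_add h2 h3)
    _ = ((2 * K + 3 : ℕ) : ℕ∞) := by
        push_cast
        ring

end Aux5
noncomputable section Aux6

open Real

lemma eventually_count_le {r : ℝ} (hr : 0 < r) :
    ∀ᶠ h : ℝ in atTop, ((2 * (Nat.floor (Real.logb 2 h) + 1) + 3 : ℕ) : ℝ) ≤ h ^ r := by
  have hlog := isLittleO_log_rpow_atTop hr
  have hc : (0:ℝ) < Real.log 2 / 4 := by positivity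
  have h1 := hlog.def hc
  have h2 : Tendsto (fun x : ℝ => x ^ r) atTop atTop := tendsto_rpow_atTop hr
  filter_upwards [h1, h2.eventually_ge_atTop 10, eventually_ge_atTop (1:ℝ)]
    with h hle h10 hh1
  have hlb0 : 0 ≤ Real.logb 2 h := Real.logb_nonneg one_lt_two hh1
  have hfl : ((Nat.floor (Real.logb 2 h) : ℝ)) ≤ Real.logb 2 h := Nat.floor_le hlb0
  have hpos : (0:ℝ) ≤ h ^ r := le_trans (by norm_num) h10
  have hnorm : Real.log h ≤ Real.log 2 / 4 * h ^ r := by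
    rwa [Real.norm_eq_abs, Real.norm_eq_abs, abs_of_nonneg (Real.log_nonneg hh1),
      abs_of_nonneg hpos] at hle
  have hlogb : Real.logb 2 h ≤ h ^ r / 4 := by
    rw [Real.logb, div_le_iff₀ (Real.log_pos one_lt_two)]
    calc Real.log h ≤ Real.log 2 / 4 * h ^ r := hnorm
      _ = h ^ r / 4 * Real.log 2 := by ring
  push_cast
  linarith

lemma beurlingDensity_ne_top_gmap {r : ℝ} (hr : 0 < r) :
    beurlingDensity r (Set.range gmap) ≠ ⊤ := by
  have hb : ∀ᶠ h : ℝ in atTop,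
      (⨆ x : Plane, (((Set.range gmap) ∩ Metric.ball x h).encard : ℝ≥0∞)
        / ENNReal.ofReal (h ^ r)) ≤ 1 := by
    filter_upwards [eventually_count_le hr, eventually_ge_atTop (1:ℝ)] with h hcount hh1
    refine iSup_le fun x => ?_
    refine ENNReal.div_le_of_le_mul ?_
    rw [one_mul]
    calc (((Set.range gmap) ∩ Metric.ball x h).encard : ℝ≥0∞)
        ≤ (((2 * (Nat.floor (Real.logb 2 h) + 1) + 3 : ℕ) : ℕ∞) : ℝ≥0∞) :=
          ENat.toENNReal_le.2 (encard_ball_le hh1 x)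
      _ = ((2 * (Nat.floor (Real.logb 2 h) + 1) + 3 : ℕ) : ℝ≥0∞) := ENat.toENNReal_coe _
      _ = ENNReal.ofReal ((2 * (Nat.floor (Real.logb 2 h) + 1) + 3 : ℕ) : ℝ) :=
          (ENNReal.ofReal_natCast _).symm
      _ ≤ ENNReal.ofReal (h ^ r) := ENNReal.ofReal_le_ofReal hcount
  have hle : beurlingDensity r (Set.range gmap) ≤ 1 := by
    unfold beurlingDensity
    exact limsup_le_of_le (by isBoundedDefault) hb
  exact ne_top_of_le_ne_top ENNReal.one_ne_top hle

lemma beurlingDim_gmap : beurlingDim (Set.range gmap) = 0 := by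
  unfold beurlingDim
  have hset : {r : ℝ | 0 < r ∧ beurlingDensity r (Set.range gmap) = ⊤} = ∅ := by
    ext r
    simp only [Set.mem_setOf_eq, Set.mem_empty_iff_false, iff_false, not_and]
    exact fun hr => beurlingDensity_ne_top_gmap hr
  rw [hset, Real.sSup_empty]

end Aux6

/-- For `β(n) = sgn(n)·2^{|n|}`, the set `Λ_β` is a spectrum of `μ_{R,B}`
with Beurling dimension zero; in particular `μ_{R,B}` has a spectrum of Beurling
dimension zero. -/
theorem isSpectrum_muRB_exp_beurlingDim_zero :
    (IsSpectrum muRB (Set.range fun n : ℤ => pt (n : ℝ) (isgn n * 2 ^ n.natAbs)) ∧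
      beurlingDim (Set.range fun n : ℤ => pt (n : ℝ) (isgn n * 2 ^ n.natAbs)) = 0) ∧
    ∃ Λ : Set Plane, IsSpectrum muRB Λ ∧ beurlingDim Λ = 0 := by
  have hs : IsSpectrum muRB (Set.range gmap) := isSpectrum_range_gmap
  have hd : beurlingDim (Set.range gmap) = 0 := beurlingDim_gmap
  exact ⟨⟨hs, hd⟩, ⟨Set.range gmap, hs, hd⟩⟩
end
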